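/- Let (ψ,ψ₁) be a finite-energy pair on (0,∞) with ψ of class C¹, lim_{r→0} ψ(r) = 0 and lim_{r→∞} ψ(r) = π. Then the energy factors as E(ψ,ψ₁) = ∫₀^∞ ψ₁² r dr + ∫₀^∞ (ψ'(r) − sin(ψ(r))/r)² r dr + 2∫₀^π sin ρ dρ, and consequently E(ψ,ψ₁) ≥ ∫₀^∞ ψ₁² r dr + 4 = ∫₀^∞ ψ₁² r dr + E(Q). -/

import Mathlib

open MeasureTheory Filter Set

noncomputable section

/-- The energy `E(ψ₀,ψ₁) = ∫₀^∞ (ψ₁² + ψ₀'² + sin²(ψ₀)/r²) r dr`. -/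
def energy (f₀ f₁ : ℝ → ℝ) : ℝ :=
  ∫ r in Set.Ioi (0 : ℝ), (f₁ r ^ 2 + deriv f₀ r ^ 2 + Real.sin (f₀ r) ^ 2 / r ^ 2) * r

/-- Bogomol'nyi factorization of the energy of a degree one pair:
`E(ψ,ψ₁) = ∫ψ₁² r dr + ∫(ψ' − sin ψ/r)² r dr + 2∫₀^π sin ρ dρ`, whence
`E(ψ,ψ₁) ≥ ∫ψ₁² r dr + 4 = ∫ψ₁² r dr + E(Q)`. -/
theorem energy_factorization_H1
    (ψ ψ₁ : ℝ → ℝ)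
    (hψ : ContDiffOn ℝ 1 ψ (Set.Ioi 0))
    (h1 : IntegrableOn (fun r => ψ₁ r ^ 2 * r) (Set.Ioi 0))
    (h2 : IntegrableOn (fun r => deriv ψ r ^ 2 * r) (Set.Ioi 0))
    (h3 : IntegrableOn (fun r => Real.sin (ψ r) ^ 2 / r ^ 2 * r) (Set.Ioi 0))
    (hlim0 : Tendsto ψ (nhdsWithin 0 (Set.Ioi 0)) (nhds 0))
    (hlimpi : Tendsto ψ atTop (nhds Real.pi)) :
    energy ψ ψ₁ = (∫ r in Set.Ioi (0:ℝ), ψ₁ r ^ 2 * r)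
        + (∫ r in Set.Ioi (0:ℝ), (deriv ψ r - Real.sin (ψ r) / r) ^ 2 * r)
        + 2 * ∫ ρ in (0:ℝ)..Real.pi, Real.sin ρ ∧
      (∫ r in Set.Ioi (0:ℝ), ψ₁ r ^ 2 * r) + 4 ≤ energy ψ ψ₁ := by
  have hopen : IsOpen (Set.Ioi (0:ℝ)) := isOpen_Ioi
  -- differentiability
  have hdiff : ∀ x ∈ Set.Ioi (0:ℝ), HasDerivAt ψ (deriv ψ x) x := fun x hx =>
    ((hψ.differentiableOn one_ne_zero x hx).differentiableAt (hopen.mem_nhds hx)).hasDerivAt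
  have hψcont : ContinuousOn ψ (Set.Ioi 0) := hψ.continuousOn
  have hdcont : ContinuousOn (deriv ψ) (Set.Ioi 0) := by
    have h := hψ.continuousOn_derivWithin hopen.uniqueDiffOn le_rfl
    exact h.congr fun x hx => (derivWithin_of_isOpen hopen hx).symm
  -- the auxiliary antiderivative
  set F : ℝ → ℝ := fun r => if r ≤ 0 then (-2 : ℝ) else -2 * Real.cos (ψ r) with hF
  set g : ℝ → ℝ := fun r => 2 * deriv ψ r * Real.sin (ψ r) with hg
  have hFeq : ∀ x ∈ Set.Ioi (0:ℝ), F x = -2 * Real.cos (ψ x) := by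
    intro x hx; simp [hF, not_le.2 (mem_Ioi.1 hx)]
  have hFcont : ContinuousWithinAt F (Set.Ici 0) 0 := by
    rw [ContinuousWithinAt]
    have h0 : F 0 = -2 := by simp [hF]
    rw [h0]
    have : nhdsWithin (0:ℝ) (Set.Ici 0) = nhdsWithin 0 {0} ⊔ nhdsWithin 0 (Set.Ioi 0) := by
      rw [← nhdsWithin_union]
      congr 1
      ext x; simp [le_iff_lt_or_eq, or_comm]
    rw [this]
    refine Tendsto.sup ?_ ?_
    · rw [nhdsWithin_singleton]
      have := tendsto_pure_nhds F 0
      simpa [h0] using this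
    · have hc : Tendsto (fun r => -2 * Real.cos (ψ r)) (nhdsWithin 0 (Set.Ioi 0)) (nhds (-2)) := by
        have := (Real.continuous_cos.tendsto 0).comp hlim0
        simpa using this.const_mul (-2:ℝ)
      exact Tendsto.congr' (by filter_upwards [self_mem_nhdsWithin] with x hx
        using (hFeq x hx).symm) hc
  have hFderiv : ∀ x ∈ Set.Ioi (0:ℝ), HasDerivAt F (g x) x := by
    intro x hx
    have hD : HasDerivAt (fun r => -2 * Real.cos (ψ r)) (g x) x := by
      have := ((Real.hasDerivAt_cos (ψ x)).comp x (hdiff x hx)).const_mul (-2:ℝ)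
      refine this.congr_deriv ?_
      show _ = 2 * deriv ψ x * Real.sin (ψ x); ring
    refine hD.congr_of_eventuallyEq ?_
    filter_upwards [hopen.mem_nhds hx] with y hy using hFeq y hy
  have hFtop : Tendsto F atTop (nhds 2) := by
    have hc : Tendsto (fun r => -2 * Real.cos (ψ r)) atTop (nhds 2) := by
      have := (Real.continuous_cos.tendsto Real.pi).comp hlimpi
      have h2 := this.const_mul (-2:ℝ)
      simpa [Real.cos_pi] using h2
    refine Tendsto.congr' ?_ hc
    filter_upwards [eventually_gt_atTop (0:ℝ)] with x hx using (hFeq x hx).symm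
  -- integrability of g
  have hg_cont : ContinuousOn g (Set.Ioi 0) := by
    exact (continuousOn_const.mul hdcont).mul (Real.continuous_sin.comp_continuousOn hψcont)
  have hg_meas : AEStronglyMeasurable g (volume.restrict (Set.Ioi 0)) :=
    hg_cont.aestronglyMeasurable measurableSet_Ioi
  have hg_bound : ∀ r ∈ Set.Ioi (0:ℝ),
      |g r| ≤ deriv ψ r ^ 2 * r + Real.sin (ψ r) ^ 2 / r ^ 2 * r := by
    intro r hr
    have hr0 : (0:ℝ) < r := hr
    set a := deriv ψ r
    set s := Real.sin (ψ r)
    have hrt : Real.sqrt r ^ 2 = r := Real.sq_sqrt hr0.le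
    have ht0 : (0:ℝ) < Real.sqrt r := Real.sqrt_pos.2 hr0
    have huv : g r = (a * Real.sqrt r) * (2 * (s / Real.sqrt r)) := by
      field_simp [hg]; ring
    have hsq : s ^ 2 / r ^ 2 * r = (s / Real.sqrt r) ^ 2 := by
      rw [div_pow, hrt]
      field_simp
    have har : a ^ 2 * r = (a * Real.sqrt r) ^ 2 := by rw [mul_pow, hrt]
    rw [huv, hsq, har]
    set u := a * Real.sqrt r
    set v := s / Real.sqrt r
    rw [abs_le]
    constructor
    · nlinarith [sq_nonneg (u + v)]
    · nlinarith [sq_nonneg (u - v)]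
  have hg_int : IntegrableOn g (Set.Ioi 0) := by
    refine Integrable.mono' (h2.add h3) hg_meas ?_
    filter_upwards [ae_restrict_mem measurableSet_Ioi] with r hr
    simpa using hg_bound r hr
  -- FTC: ∫ g = 4
  have hFTC : ∫ r in Set.Ioi (0:ℝ), g r = 4 := by
    have := integral_Ioi_of_hasDerivAt_of_tendsto hFcont hFderiv hg_int hFtop
    have hF0 : F 0 = -2 := by simp [hF]
    rw [this, hF0]; norm_num
  -- pointwise identity
  have hpt : ∀ r ∈ Set.Ioi (0:ℝ),
      (ψ₁ r ^ 2 + deriv ψ r ^ 2 + Real.sin (ψ r) ^ 2 / r ^ 2) * r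
        = ψ₁ r ^ 2 * r + ((deriv ψ r - Real.sin (ψ r) / r) ^ 2 * r + g r) := by
    intro r hr
    have hr0 : (r:ℝ) ≠ 0 := ne_of_gt hr
    field_simp [hg]
    ring
  -- integrability of B
  have hBpt : ∀ r ∈ Set.Ioi (0:ℝ),
      (deriv ψ r - Real.sin (ψ r) / r) ^ 2 * r
        = (deriv ψ r ^ 2 * r + Real.sin (ψ r) ^ 2 / r ^ 2 * r) - g r := by
    intro r hr
    have hr0 : (r:ℝ) ≠ 0 := ne_of_gt hr
    field_simp [hg]
    ring
  have hB_int : IntegrableOn (fun r => (deriv ψ r - Real.sin (ψ r) / r) ^ 2 * r) (Set.Ioi 0) := by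
    refine Integrable.congr ((h2.add h3).sub hg_int) ?_
    filter_upwards [ae_restrict_mem measurableSet_Ioi] with r hr
    exact (hBpt r hr).symm
  -- main computation
  have hmain : energy ψ ψ₁ = (∫ r in Set.Ioi (0:ℝ), ψ₁ r ^ 2 * r)
      + (∫ r in Set.Ioi (0:ℝ), (deriv ψ r - Real.sin (ψ r) / r) ^ 2 * r) + 4 := by
    rw [energy]
    have hcongr : ∫ r in Set.Ioi (0:ℝ),
        (ψ₁ r ^ 2 + deriv ψ r ^ 2 + Real.sin (ψ r) ^ 2 / r ^ 2) * r
        = ∫ r in Set.Ioi (0:ℝ),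
          (ψ₁ r ^ 2 * r + ((deriv ψ r - Real.sin (ψ r) / r) ^ 2 * r + g r)) := by
      refine integral_congr_ae ?_
      filter_upwards [ae_restrict_mem measurableSet_Ioi] with r hr using hpt r hr
    have e1 : ∫ r in Set.Ioi (0:ℝ),
        (ψ₁ r ^ 2 * r + ((deriv ψ r - Real.sin (ψ r) / r) ^ 2 * r + g r))
        = (∫ r in Set.Ioi (0:ℝ), ψ₁ r ^ 2 * r)
          + ∫ r in Set.Ioi (0:ℝ), ((deriv ψ r - Real.sin (ψ r) / r) ^ 2 * r + g r) :=
      integral_add h1 (hB_int.add hg_int)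
    have e2 : ∫ r in Set.Ioi (0:ℝ), ((deriv ψ r - Real.sin (ψ r) / r) ^ 2 * r + g r)
        = (∫ r in Set.Ioi (0:ℝ), (deriv ψ r - Real.sin (ψ r) / r) ^ 2 * r)
          + ∫ r in Set.Ioi (0:ℝ), g r :=
      integral_add hB_int hg_int
    rw [hcongr, e1, e2, hFTC]
    ring
  have hsin : (2:ℝ) * ∫ ρ in (0:ℝ)..Real.pi, Real.sin ρ = 4 := by
    rw [integral_sin]; simp; norm_num
  constructor
  · rw [hmain, hsin]
  · have hB_nonneg : 0 ≤ ∫ r in Set.Ioi (0:ℝ), (deriv ψ r - Real.sin (ψ r) / r) ^ 2 * r := by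
      refine setIntegral_nonneg measurableSet_Ioi fun r hr => ?_
      exact mul_nonneg (sq_nonneg _) (le_of_lt hr)
    rw [hmain]
    linarith
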